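/- arXiv:1705.06616 — 6 statements merged into one kernel-verified Lean document; each statement's English description precedes it below -/
import Mathlib

section
/- For all integers m and all real numbers a, b: Σ_{m ∈ ℤ} sinc(m + a) · sinc(m + b) = sinc(b − a), where sinc(x) = sin(πx)/(πx) (with sinc(0)=1). -/
/-- The normalized sinc function: sinc(x) = sin(πx)/(πx), sinc(0) = 1. -/
noncomputable def sinc (x : ℝ) : ℝ :=
  if x = 0 then 1 else Real.sin (Real.pi * x) / (Real.pi * x)

open MeasureTheory Set AddCircle Complex

private lemma sinc_integral (c : ℝ) :
    ∫ x in (-(1/2) : ℝ)..(-(1/2) + 1), Complex.exp (2 * Real.pi * Complex.I * c * x)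
      = (sinc c : ℂ) := by
  rcases eq_or_ne c 0 with rfl | hc
  · simp [sinc]
  · have hπ : (Real.pi : ℂ) ≠ 0 := Complex.ofReal_ne_zero.2 Real.pi_ne_zero
    have hcC : (c : ℂ) ≠ 0 := Complex.ofReal_ne_zero.2 hc
    have h2 : (2 * (Real.pi:ℂ) * Complex.I * c) ≠ 0 := by
      simp [hπ, Complex.I_ne_zero, hcC]
    rw [integral_exp_mul_complex h2, sinc, if_neg hc]
    push_cast
    rw [Complex.sin]
    have e1 : 2 * (Real.pi:ℂ) * Complex.I * c * (-(1/2) + 1 : ℂ)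
        = (Real.pi:ℂ) * c * Complex.I := by ring_nf
    have e2 : 2 * (Real.pi:ℂ) * Complex.I * c * (-(1/2) : ℂ)
        = -((Real.pi:ℂ) * c) * Complex.I := by ring_nf
    rw [e1, e2]
    have hI : Complex.I ≠ 0 := Complex.I_ne_zero
    field_simp
    ring_nf
    rw [Complex.I_sq]
    ring

private instance fact_zero_lt_one_real : Fact ((0:ℝ) < 1) := ⟨one_pos⟩

private noncomputable def gfun (c : ℝ) : AddCircle (1:ℝ) → ℂ :=
  AddCircle.liftIoc 1 (-(1/2)) (fun x : ℝ => Complex.exp (2 * Real.pi * Complex.I * c * x))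

private lemma fourierCoeff_gfun (c : ℝ) (n : ℤ) :
    fourierCoeff (gfun c) n = (sinc (c - n) : ℂ) := by
  rw [fourierCoeff_eq_intervalIntegral _ n (-(1/2))]
  have key : (∫ x in (-(1/2):ℝ)..(-(1/2)+1), fourier (-n) (x : AddCircle (1:ℝ)) • gfun c (x : AddCircle (1:ℝ)))
      = ∫ x in (-(1/2):ℝ)..(-(1/2)+1), Complex.exp (2 * Real.pi * Complex.I * ((c:ℝ) - n) * x) := by
    rw [intervalIntegral.integral_of_le (by norm_num), intervalIntegral.integral_of_le (by norm_num)]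
    refine setIntegral_congr_fun measurableSet_Ioc fun x hx => ?_
    rw [gfun, AddCircle.liftIoc_coe_apply hx, fourier_coe_apply, smul_eq_mul, ← Complex.exp_add]
    congr 1
    push_cast
    field_simp
    ring
  rw [key]
  have := sinc_integral (c - n)
  push_cast at this
  rw [this]
  norm_num

private lemma memLp_gfun (c : ℝ) : MemLp (gfun c) 2 (AddCircle.haarAddCircle (T := 1)) := by
  have hm : Measurable (gfun c) := by
    have h1 : gfun c = (fun y : ℝ => Complex.exp (2 * Real.pi * Complex.I * c * y)) ∘
        (fun z : AddCircle (1:ℝ) =>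
          ((AddCircle.measurableEquivIoc 1 (-(1/2)) z : Set.Ioc (-(1/2):ℝ) (-(1/2)+1)) : ℝ)) := rfl
    rw [h1]
    exact (Complex.continuous_exp.comp (by continuity)).measurable.comp
      (measurable_subtype_coe.comp (AddCircle.measurableEquivIoc 1 (-(1/2))).measurable)
  refine MemLp.of_bound hm.aestronglyMeasurable 1 (ae_of_all _ fun x => ?_)
  show ‖Complex.exp (2 * (Real.pi:ℂ) * Complex.I * c *
      ((AddCircle.equivIoc 1 (-(1/2)) x : ℝ) : ℂ))‖ ≤ 1
  set y : ℝ := (AddCircle.equivIoc 1 (-(1/2)) x : ℝ)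
  have : 2 * (Real.pi:ℂ) * Complex.I * c * (y : ℂ) = ((2 * Real.pi * c * y : ℝ) : ℂ) * Complex.I := by
    push_cast; ring
  rw [this, Complex.norm_exp_ofReal_mul_I]

private noncomputable def Fc (c : ℝ) : Lp ℂ 2 (AddCircle.haarAddCircle (T := 1)) :=
  (memLp_gfun c).toLp _

private lemma coe_Fc (c : ℝ) : ⇑(Fc c) =ᵐ[AddCircle.haarAddCircle (T := 1)] gfun c :=
  (memLp_gfun c).coeFn_toLp

private lemma fourierCoeff_Fc (c : ℝ) (n : ℤ) :
    fourierCoeff (⇑(Fc c) : AddCircle (1:ℝ) → ℂ) n = (sinc (c - n) : ℂ) := by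
  rw [← fourierCoeff_gfun c n]
  unfold fourierCoeff
  exact integral_congr_ae ((coe_Fc c).mono fun x hx => by simp only []; rw [hx])

private lemma inner_Fc (a b : ℝ) : (inner ℂ (Fc a) (Fc b) : ℂ) = (sinc (b - a) : ℂ) := by
  rw [MeasureTheory.L2.inner_def]
  have h1 : ∀ᵐ x ∂(AddCircle.haarAddCircle (T := 1)),
      (inner ℂ (Fc a x) (Fc b x) : ℂ) = gfun (b - a) x := by
    filter_upwards [coe_Fc a, coe_Fc b] with x hxa hxb
    rw [hxa, hxb, RCLike.inner_apply]
    show Complex.exp _ * (starRingEnd ℂ) (Complex.exp _) = Complex.exp _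
    rw [← Complex.exp_conj, ← Complex.exp_add]
    congr 1
    simp only [map_mul, Complex.conj_I, Complex.conj_ofReal, map_ofNat]
    push_cast
    ring
  rw [integral_congr_ae h1]
  have h2 : (∫ x, gfun (b - a) x ∂(AddCircle.haarAddCircle (T := 1)))
      = fourierCoeff (gfun (b - a)) 0 := by
    unfold fourierCoeff
    simp [fourier_zero]
  rw [h2, fourierCoeff_gfun]
  norm_num

/-- Σ_{m ∈ ℤ} sinc(m + a) · sinc(m + b) = sinc(b − a). -/
theorem sinc_sum_identity (a b : ℝ) :
    ∑' m : ℤ, sinc ((m : ℝ) + a) * sinc ((m : ℝ) + b) = sinc (b - a) := by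
  have hco : ∀ (c : ℝ) (i : ℤ),
      (inner ℂ ((fourierBasis (T := 1)) i) (Fc c) : ℂ) = (sinc (c - i) : ℂ) := by
    intro c i
    rw [← fourierBasis.repr_apply_apply, fourierBasis_repr, fourierCoeff_Fc]
  have key : (∑' i : ℤ, ((sinc (a - i) * sinc (b - i) : ℝ) : ℂ)) = (sinc (b - a) : ℂ) := by
    rw [← inner_Fc a b, ← fourierBasis.tsum_inner_mul_inner (Fc a) (Fc b)]
    refine tsum_congr fun i => ?_
    have h1 : (inner ℂ (Fc a) ((fourierBasis (T := 1)) i) : ℂ) = (sinc (a - i) : ℂ) := by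
      rw [← inner_conj_symm, hco a i, Complex.conj_ofReal]
    rw [h1, hco b i, Complex.ofReal_mul]
  have hreal : (∑' i : ℤ, (sinc (a - i) * sinc (b - i) : ℝ)) = sinc (b - a) := by
    rw [← Complex.ofReal_tsum] at key
    exact_mod_cast key
  calc ∑' m : ℤ, sinc ((m : ℝ) + a) * sinc ((m : ℝ) + b)
      = ∑' m : ℤ, sinc (a - ((Equiv.neg ℤ m : ℤ) : ℝ)) * sinc (b - ((Equiv.neg ℤ m : ℤ) : ℝ)) := by
        refine tsum_congr fun m => ?_
        rw [show ((m : ℝ) + a) = a - ((Equiv.neg ℤ m : ℤ) : ℝ) by simp [Equiv.neg_apply]; ring,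
           show ((m : ℝ) + b) = b - ((Equiv.neg ℤ m : ℤ) : ℝ) by simp [Equiv.neg_apply]; ring]
    _ = ∑' i : ℤ, sinc (a - i) * sinc (b - i) :=
        (Equiv.neg ℤ).tsum_eq fun i => sinc (a - i) * sinc (b - i)
    _ = sinc (b - a) := hreal
end

section
/- Let G : Finset V → ℝ be monotone and submodular with G(∅) = 0, and let S* maximize G over subsets of cardinality at most N. If S_gr is the output of the greedy algorithm that iteratively adds the element with largest marginal gain for N steps, then G(S_gr) ≥ (1 − (1 − 1/N)^N) · G(S*) ≥ (1 − 1/e) · G(S*). -/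
/-- A set function with diminishing marginal gains. -/
def SubmodularFn {V : Type*} [DecidableEq V] (G : Finset V → ℝ) : Prop :=
  ∀ S T : Finset V, S ⊆ T → ∀ x ∉ T,
    G (insert x T) - G T ≤ G (insert x S) - G S

/-- A monotone (increasing) set function. -/
def MonotoneFn {V : Type*} (G : Finset V → ℝ) : Prop :=
  ∀ S T : Finset V, S ⊆ T → G S ≤ G T

lemma submodular_union_le_sum {V : Type*} [DecidableEq V] (G : Finset V → ℝ)
    (hmono : MonotoneFn G) (hsub : SubmodularFn G) (S T : Finset V) :
    G (S ∪ T) ≤ G S + ∑ x ∈ T, (G (insert x S) - G S) := by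
  induction T using Finset.induction with
  | empty => simp
  | insert _ _ ha ih =>
    rename_i a T
    rw [Finset.sum_insert ha]
    have h1 : G (S ∪ insert a T) ≤ G (S ∪ T) + (G (insert a S) - G S) := by
      by_cases hin : a ∈ S ∪ T
      · rw [Finset.union_insert, Finset.insert_eq_self.mpr hin]
        have := hmono S (insert a S) (Finset.subset_insert a S)
        linarith
      · rw [Finset.union_insert]
        have := hsub S (S ∪ T) Finset.subset_union_left a hin
        linarith
    linarith

/-- Nemhauser–Wolsey–Fisher guarantee: the greedy algorithm for maximizing a
monotone submodular function under a cardinality constraint achieves at least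
a (1 − (1 − 1/N)^N) ≥ (1 − 1/e) fraction of the optimum. The greedy iterates
are encoded by a chain S with S 0 = ∅ where each step inserts an element of
maximal marginal gain. -/
theorem greedy_submodular_max
    {V : Type*} [DecidableEq V] [Fintype V]
    (G : Finset V → ℝ) (hmono : MonotoneFn G) (hsub : SubmodularFn G)
    (h0 : G ∅ = 0) (N : ℕ) (hN : 0 < N)
    (S : ℕ → Finset V) (hS0 : S 0 = ∅)
    (hgreedy : ∀ i < N, ∃ x, x ∉ S i ∧ S (i + 1) = insert x (S i) ∧
        ∀ y : V, G (insert y (S i)) ≤ G (insert x (S i)))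
    (Sstar : Finset V) (hopt : Sstar.card ≤ N ∧
        ∀ T : Finset V, T.card ≤ N → G T ≤ G Sstar) :
    (1 - (1 - 1 / (N : ℝ)) ^ N) * G Sstar ≤ G (S N) ∧
    (1 - 1 / Real.exp 1) * G Sstar ≤ (1 - (1 - 1 / (N : ℝ)) ^ N) * G Sstar := by
  have hNpos : (0:ℝ) < N := by exact_mod_cast hN
  have hNfrac : (0:ℝ) ≤ 1 - 1 / N := by
    rw [sub_nonneg, div_le_one hNpos]
    exact_mod_cast hN
  have hstar_nonneg : 0 ≤ G Sstar := by
    have := hmono ∅ Sstar (Finset.empty_subset _)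
    linarith
  -- key per-step inequality
  have key : ∀ i < N, G Sstar - G (S (i+1)) ≤ (1 - 1/(N:ℝ)) * (G Sstar - G (S i)) := by
    intro i hi
    obtain ⟨x, hx, hSi1, hmax⟩ := hgreedy i hi
    set δ := G (S (i+1)) - G (S i) with hδ
    have hδ0 : 0 ≤ δ := by
      have := hmono (S i) (insert x (S i)) (Finset.subset_insert _ _)
      rw [hδ, hSi1]; linarith
    have hterm : ∀ y ∈ Sstar, G (insert y (S i)) - G (S i) ≤ δ := by
      intro y _
      have := hmax y
      rw [hδ, hSi1]; linarith
    have hsum : G Sstar ≤ G (S i) + Sstar.card * δ := by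
      have h1 := submodular_union_le_sum G hmono hsub (S i) Sstar
      have h2 : ∑ y ∈ Sstar, (G (insert y (S i)) - G (S i)) ≤ Sstar.card • δ :=
        Finset.sum_le_card_nsmul _ _ _ hterm
      have h3 := hmono Sstar (S i ∪ Sstar) Finset.subset_union_right
      rw [nsmul_eq_mul] at h2
      linarith
    have hcard : (Sstar.card : ℝ) * δ ≤ N * δ := by
      apply mul_le_mul_of_nonneg_right _ hδ0
      exact_mod_cast hopt.1
    have hA : G Sstar - G (S i) ≤ N * δ := by linarith
    have hdiv : (1/(N:ℝ)) * (G Sstar - G (S i)) ≤ δ := by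
      have := mul_le_mul_of_nonneg_left hA (le_of_lt (one_div_pos.mpr hNpos))
      rw [← mul_assoc, one_div_mul_cancel (ne_of_gt hNpos), one_mul] at this
      exact this
    have : G Sstar - G (S (i+1)) = (G Sstar - G (S i)) - δ := by rw [hδ]; ring
    rw [this]; nlinarith [hdiv]
  -- main induction
  have main : ∀ i ≤ N, G Sstar - G (S i) ≤ (1 - 1/(N:ℝ))^i * G Sstar := by
    intro i hi
    induction i with
    | zero => simp [hS0, h0]
    | succ i ih =>
      have hi' : i < N := Nat.lt_of_succ_le hi
      have h1 := key i hi'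
      have h2 := ih (le_of_lt hi')
      calc G Sstar - G (S (i+1)) ≤ (1 - 1/(N:ℝ)) * (G Sstar - G (S i)) := h1
        _ ≤ (1 - 1/(N:ℝ)) * ((1 - 1/(N:ℝ))^i * G Sstar) :=
            mul_le_mul_of_nonneg_left h2 hNfrac
        _ = (1 - 1/(N:ℝ))^(i+1) * G Sstar := by ring
  have hfirst : (1 - (1 - 1 / (N : ℝ)) ^ N) * G Sstar ≤ G (S N) := by
    have := main N le_rfl
    nlinarith [this]
  refine ⟨hfirst, ?_⟩
  have hpow : (1 - 1/(N:ℝ))^N ≤ 1 / Real.exp 1 := by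
    have h1 : 1 - 1/(N:ℝ) ≤ Real.exp (-(1/N)) := by
      have := Real.add_one_le_exp (-(1/(N:ℝ)))
      linarith
    calc (1 - 1/(N:ℝ))^N ≤ (Real.exp (-(1/N)))^N := pow_le_pow_left₀ hNfrac h1 N
      _ = Real.exp ((N:ℝ) * (-(1/N))) := by rw [← Real.exp_nat_mul]
      _ = Real.exp (-1) := by congr 1; field_simp
      _ = 1 / Real.exp 1 := by rw [Real.exp_neg]; ring
  nlinarith [hpow, hstar_nonneg]
end

section
/- Let M = (V, I) be a matroid and G : Finset V → ℝ a monotone submodular function with G(∅) = 0. The greedy algorithm that repeatedly adds the feasible element with largest marginal gain (maintaining independence in M) until no element can be added returns a set S_gr with G(S_gr) ≥ (1/2) · max_{S ∈ I} G(S). -/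
/-- Telescoping marginal bound: `G (S ∪ D) ≤ G S + ∑_{t ∈ D} (G (insert t S) - G S)`. -/
lemma union_marginal_bound {V : Type*} [DecidableEq V] (G : Finset V → ℝ)
    (hsub : SubmodularFn G) (S : Finset V) :
    ∀ D : Finset V, (∀ t ∈ D, t ∉ S) →
      G (S ∪ D) ≤ G S + ∑ t ∈ D, (G (insert t S) - G S) := by
  intro D
  induction D using Finset.induction_on with
  | empty => simp
  | @insert a D' ha ih =>
    intro hD
    have haS : a ∉ S := hD a (Finset.mem_insert_self a D')
    have haSD : a ∉ S ∪ D' := by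
      simp only [Finset.mem_union, not_or]
      exact ⟨haS, ha⟩
    have h1 : G (insert a (S ∪ D')) - G (S ∪ D') ≤ G (insert a S) - G S :=
      hsub S (S ∪ D') Finset.subset_union_left a haSD
    have h2 : G (S ∪ D') ≤ G S + ∑ t ∈ D', (G (insert t S) - G S) :=
      ih (fun t ht => hD t (Finset.mem_insert_of_mem ht))
    have h3 : S ∪ insert a D' = insert a (S ∪ D') := by
      ext x; simp [or_comm, or_assoc, or_left_comm]
    rw [h3, Finset.sum_insert ha]
    linarith

/-- Greedy maximization of a monotone submodular function subject to a matroid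
independence constraint achieves a 1/2-approximation: G(S_gr) ≥ (1/2)·max_{S ∈ I} G(S).
The matroid is given by its independence predicate `Indep`, and the greedy run is
a chain S with S 0 = ∅, each step adding a feasible element of maximal marginal
gain, stopping (after n steps) when no feasible element remains. -/
theorem matroid_greedy_half_approx
    {V : Type*} [DecidableEq V] [Fintype V]
    (Indep : Finset V → Prop)
    (h_empty : Indep ∅)
    (h_down : ∀ X Y : Finset V, X ⊆ Y → Indep Y → Indep X)
    (h_exch : ∀ X Y : Finset V, Indep X → Indep Y → X.card < Y.card →
        ∃ e ∈ Y \ X, Indep (insert e X))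
    (G : Finset V → ℝ) (hmono : MonotoneFn G) (hsub : SubmodularFn G)
    (h0 : G ∅ = 0)
    (n : ℕ) (S : ℕ → Finset V) (hS0 : S 0 = ∅)
    (hstep : ∀ i < n, ∃ x, x ∉ S i ∧ Indep (insert x (S i)) ∧
        S (i + 1) = insert x (S i) ∧
        ∀ y ∉ S i, Indep (insert y (S i)) →
          G (insert y (S i)) - G (S i) ≤ G (insert x (S i)) - G (S i))
    (hstop : ∀ y ∉ S n, ¬ Indep (insert y (S n)))
    (T : Finset V) (hT : Indep T) :
    (1 / 2 : ℝ) * G T ≤ G (S n) := by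
  classical
  rcases Nat.eq_zero_or_pos n with hn | hn
  · -- n = 0 : then T must be empty
    have hT0 : T = ∅ := by
      by_contra h
      obtain ⟨t, ht⟩ := Finset.nonempty_iff_ne_empty.mpr h
      have hts : insert t (S n) = {t} := by rw [hn, hS0]; rfl
      have hIt : Indep (insert t (S n)) := by
        rw [hts]
        exact h_down {t} T (by simpa using ht) hT
      exact hstop t (by rw [hn, hS0]; exact Finset.notMem_empty t) hIt
    have hSn : G (S n) = 0 := by rw [hn, hS0, h0]
    rw [hT0, h0, hSn]; norm_num
  -- Main case: n ≥ 1
  have hstep_sub : ∀ i < n, S i ⊆ S (i + 1) := by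
    intro i hi
    obtain ⟨x, -, -, hx3, -⟩ := hstep i hi
    rw [hx3]; exact Finset.subset_insert _ _
  have hchain : ∀ j ≤ n, ∀ i ≤ j, S i ⊆ S j := by
    intro j
    induction j with
    | zero => intro _ i hi; rw [Nat.le_zero.mp hi]
    | succ m ih =>
      intro hj i hi
      rcases eq_or_lt_of_le hi with rfl | h
      · exact Finset.Subset.refl _
      · exact (ih (by omega) i (by omega)).trans (hstep_sub m (by omega))
  have hInd : ∀ i ≤ n, Indep (S i) := by
    intro i
    induction i with
    | zero => intro _; rw [hS0]; exact h_empty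
    | succ m ih =>
      intro hm
      obtain ⟨x, -, hx2, hx3, -⟩ := hstep m (by omega)
      rw [hx3]; exact hx2
  have hcard : ∀ i ≤ n, (S i).card = i := by
    intro i
    induction i with
    | zero => intro _; rw [hS0]; rfl
    | succ m ih =>
      intro hm
      obtain ⟨x, hx1, -, hx3, -⟩ := hstep m (by omega)
      rw [hx3, Finset.card_insert_of_notMem hx1, ih (by omega)]
  -- gains are nonneg and nonincreasing
  have hδnonneg : ∀ i < n, 0 ≤ G (S (i + 1)) - G (S i) := by
    intro i hi
    have := hmono (S i) (S (i + 1)) (hstep_sub i hi)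
    linarith
  have hδmono : ∀ i < n, G (S (i + 1)) - G (S i) ≤ G (S (i - 1 + 1)) - G (S (i - 1)) := by
    intro i hi
    cases i with
    | zero => simp
    | succ m =>
      simp only [Nat.add_sub_cancel]
      obtain ⟨x, hx1, hx2, hx3, -⟩ := hstep (m + 1) hi
      obtain ⟨x', hx'1, hx'2, hx'3, hx'4⟩ := hstep m (by omega)
      have hxm : x ∉ S m := fun h => hx1 (hstep_sub m (by omega) h)
      have hIxm : Indep (insert x (S m)) :=
        h_down _ (insert x (S (m + 1)))
          (Finset.insert_subset_insert x (hstep_sub m (by omega))) hx2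
      have h1 : G (insert x (S m)) - G (S m) ≤ G (insert x' (S m)) - G (S m) :=
        hx'4 x hxm hIxm
      have h2 : G (insert x (S (m + 1))) - G (S (m + 1)) ≤ G (insert x (S m)) - G (S m) :=
        hsub (S m) (S (m + 1)) (hstep_sub m (by omega)) x hx1
      rw [hx3, ← hx'3] at *
      linarith [h1, h2]
  set D := T \ S n with hD
  -- for each t in D, a step index where t becomes infeasible, with marginal bound
  have key : ∀ t : V, ∃ j, t ∈ D →
      j < n ∧ (G (insert t (S n)) - G (S n) ≤ G (S (j + 1)) - G (S j)) ∧
      ¬ Indep (insert t (S (j + 1))) := by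
    intro t
    by_cases ht : t ∈ D
    · have htT : t ∈ T := (Finset.mem_sdiff.mp ht).1
      have htS : t ∉ S n := (Finset.mem_sdiff.mp ht).2
      have hn1 : n - 1 + 1 = n := Nat.succ_pred_eq_of_pos hn
      have hexists : ∃ j, ¬ Indep (insert t (S (j + 1))) := by
        refine ⟨n - 1, ?_⟩
        rw [hn1]
        exact hstop t htS
      refine ⟨Nat.find hexists, fun _ => ?_⟩
      set j := Nat.find hexists with hj
      have hfind : ¬ Indep (insert t (S (j + 1))) := Nat.find_spec hexists
      have hj_min : ∀ m < j, Indep (insert t (S (m + 1))) :=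
        fun m hm => not_not.mp (Nat.find_min hexists hm)
      have hjn : j < n := by
        by_contra h
        push_neg at h
        have : Indep (insert t (S (n - 1 + 1))) := hj_min (n - 1) (by omega)
        rw [hn1] at this
        exact hstop t htS this
      have hIndj : Indep (insert t (S j)) := by
        rcases Nat.eq_zero_or_pos j with hj0 | hj1
        · rw [hj0, hS0]
          exact h_down (insert t ∅) T (by simpa using htT) hT
        · have h := hj_min (j - 1) (by omega)
          have hj2 : j - 1 + 1 = j := by omega
          rwa [hj2] at h
      have htSj : t ∉ S j := fun h => htS (hchain n le_rfl j (le_of_lt hjn) h)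
      obtain ⟨x, hx1, hx2, hx3, hx4⟩ := hstep j hjn
      have h1 : G (insert t (S j)) - G (S j) ≤ G (insert x (S j)) - G (S j) :=
        hx4 t htSj hIndj
      have h2 : G (insert t (S n)) - G (S n) ≤ G (insert t (S j)) - G (S j) :=
        hsub (S j) (S n) (hchain n le_rfl j (le_of_lt hjn)) t htS
      refine ⟨hjn, ?_, hfind⟩
      rw [hx3]
      linarith
    · exact ⟨0, fun h => absurd h ht⟩
  choose k hk using key
  -- counting bound: at most i elements of D become infeasible by step i
  have hcount : ∀ i ≤ n, (D.filter (fun t => k t < i)).card ≤ i := by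
    intro i hi
    by_contra h
    push_neg at h
    have hIndA : Indep (D.filter (fun t => k t < i)) := by
      refine h_down _ T ?_ hT
      intro t ht
      exact (Finset.mem_sdiff.mp (Finset.mem_filter.mp ht).1).1
    have hcardi : (S i).card < (D.filter (fun t => k t < i)).card := by
      rw [hcard i hi]; exact h
    obtain ⟨e, he, heI⟩ := h_exch (S i) _ (hInd i hi) hIndA hcardi
    have he1 : e ∈ D.filter (fun t => k t < i) := (Finset.mem_sdiff.mp he).1
    have heD : e ∈ D := (Finset.mem_filter.mp he1).1
    have hek : k e < i := (Finset.mem_filter.mp he1).2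
    have hnot : ¬ Indep (insert e (S (k e + 1))) := (hk e heD).2.2
    apply hnot
    exact h_down _ (insert e (S i))
      (Finset.insert_subset_insert e (hchain i hi (k e + 1) (by omega))) heI
  -- Abel-summation invariant
  have inv : ∀ i ≤ n,
      (∑ t ∈ D.filter (fun t => k t < i), (G (S (k t + 1)) - G (S (k t))))
        + ((i : ℝ) - (D.filter (fun t => k t < i)).card)
            * (G (S (i - 1 + 1)) - G (S (i - 1))) ≤ G (S i) := by
    intro i
    induction i with
    | zero =>
      intro _
      simp [hS0, h0]
    | succ m ih =>
      intro hm1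
      have hmn : m < n := hm1
      have hsplit : D.filter (fun t => k t < m + 1)
          = D.filter (fun t => k t < m) ∪ D.filter (fun t => k t = m) := by
        rw [← Finset.filter_or]
        apply Finset.filter_congr
        intro t _
        simp [Nat.lt_succ_iff_lt_or_eq]; omega
      have hdisj : Disjoint (D.filter (fun t => k t < m)) (D.filter (fun t => k t = m)) := by
        rw [Finset.disjoint_left]
        intro a ha hb
        have h1 := (Finset.mem_filter.mp ha).2
        have h2 := (Finset.mem_filter.mp hb).2
        omega
      have hsum2 : ∑ t ∈ D.filter (fun t => k t = m), (G (S (k t + 1)) - G (S (k t)))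
          = ((D.filter (fun t => k t = m)).card : ℝ) * (G (S (m + 1)) - G (S m)) := by
        rw [Finset.sum_congr rfl (fun t ht => by
          rw [(Finset.mem_filter.mp ht).2]), Finset.sum_const, nsmul_eq_mul]
      have hihm := ih (le_of_lt hmn)
      have hp : (0 : ℝ) ≤ (m : ℝ) - (D.filter (fun t => k t < m)).card := by
        have := hcount m (le_of_lt hmn)
        have : ((D.filter (fun t => k t < m)).card : ℝ) ≤ (m : ℝ) := by exact_mod_cast this
        linarith
      have hprod := mul_le_mul_of_nonneg_left (hδmono m hmn) hp
      rw [hsplit, Finset.sum_union hdisj, hsum2, Finset.card_union_of_disjoint hdisj]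
      simp only [Nat.add_sub_cancel]
      push_cast
      nlinarith [hihm, hprod, hδnonneg m hmn]
  -- assemble
  have hAn : D.filter (fun t => k t < n) = D :=
    Finset.filter_true_of_mem (fun t ht => (hk t ht).1)
  have hinvn := inv n le_rfl
  rw [hAn] at hinvn
  have hDn : (D.card : ℝ) ≤ (n : ℝ) := by
    have := hcount n le_rfl
    rw [hAn] at this
    exact_mod_cast this
  have hlast : 0 ≤ ((n : ℝ) - D.card) * (G (S (n - 1 + 1)) - G (S (n - 1))) := by
    apply mul_nonneg (by linarith)
    exact hδnonneg (n - 1) (by omega)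
  have hsumδ : ∑ t ∈ D, (G (S (k t + 1)) - G (S (k t))) ≤ G (S n) := by linarith
  have hmarg : ∑ t ∈ D, (G (insert t (S n)) - G (S n))
      ≤ ∑ t ∈ D, (G (S (k t + 1)) - G (S (k t))) :=
    Finset.sum_le_sum (fun t ht => (hk t ht).2.1)
  have htel : G (S n ∪ D) ≤ G (S n) + ∑ t ∈ D, (G (insert t (S n)) - G (S n)) :=
    union_marginal_bound G hsub (S n) D (fun t ht => (Finset.mem_sdiff.mp ht).2)
  have hTsub : T ⊆ S n ∪ D := by
    intro t ht
    by_cases hts : t ∈ S n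
    · exact Finset.mem_union_left _ hts
    · exact Finset.mem_union_right _ (Finset.mem_sdiff.mpr ⟨ht, hts⟩)
  have hGT : G T ≤ G (S n ∪ D) := hmono T _ hTsub
  linarith
end

section
/- Let X, Y, Z be jointly Gaussian random vectors where the coordinates of the observation vector are conditionally independent given the parameter vector β. Then the set function G(S) = I(f_S ; β), the mutual information between the measurements indexed by S and β, is submodular: for S ⊆ T and x ∉ T, G(S ∪ {x}) − G(S) ≥ G(T ∪ {x}) − G(T). -/
open Matrix
open scoped ComplexOrder

theorem misub_posDef_submatrix {m V : Type*} [Fintype m] [Fintype V] [DecidableEq V]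
    {M : Matrix V V ℂ} (hM : M.PosDef) (e : m → V) (he : Function.Injective e) :
    (M.submatrix e e).PosDef := by
  classical
  refine PosDef.of_dotProduct_mulVec_pos (hM.1.submatrix e) fun x hx => ?_
  have h1 : M.submatrix e e
      = ((1 : Matrix V V ℂ).submatrix id e)ᴴ * M * ((1 : Matrix V V ℂ).submatrix id e) := by
    rw [conjTranspose_submatrix, conjTranspose_one]
    conv_lhs => rw [(by simp : M = 1 * M * 1)]
    rw [submatrix_mul (he₂ := Function.bijective_id),
      submatrix_mul (he₂ := Function.bijective_id), submatrix_id_id]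
  have hy : (1 : Matrix V V ℂ).submatrix id e *ᵥ x ≠ 0 := by
    obtain ⟨i₀, hi₀⟩ := Function.ne_iff.mp hx
    intro h
    apply hi₀
    have := congrFun h (e i₀)
    simpa [mulVec, dotProduct, one_apply, he.eq_iff] using this
  have := hM.dotProduct_mulVec_pos hy
  rw [h1]
  simpa only [star_mulVec, dotProduct_mulVec, vecMul_vecMul] using this

theorem misub_schur {α β : Type*} [Fintype α] [Fintype β] [DecidableEq α] [DecidableEq β]
    (N : Matrix (α ⊕ β) (α ⊕ β) ℂ) (hN : N.PosDef) :
    N.det = N.toBlocks₁₁.det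
        * (N.toBlocks₂₂ - N.toBlocks₁₂ᴴ * N.toBlocks₁₁⁻¹ * N.toBlocks₁₂).det ∧
      (N.toBlocks₂₂ - N.toBlocks₁₂ᴴ * N.toBlocks₁₁⁻¹ * N.toBlocks₁₂).PosSemidef := by
  set A := N.toBlocks₁₁ with hA'
  set B := N.toBlocks₁₂ with hB'
  have hA : A.PosDef := by
    have : A = N.submatrix Sum.inl Sum.inl := rfl
    rw [this]
    exact misub_posDef_submatrix hN _ Sum.inl_injective
  have h21 : N.toBlocks₂₁ = Bᴴ := by
    ext i j
    have := congrFun (congrFun hN.1 (Sum.inr i)) (Sum.inl j)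
    simpa [hB', conjTranspose_apply, toBlocks₂₁, toBlocks₁₂, eq_comm] using this.symm
  have hNb : N = fromBlocks A B Bᴴ N.toBlocks₂₂ := by
    rw [← h21, hA', hB', fromBlocks_toBlocks]
  haveI : Invertible A := hA.isUnit.invertible
  constructor
  · conv_lhs => rw [hNb]
    rw [det_fromBlocks₁₁, invOf_eq_nonsing_inv]
  · rw [← Matrix.PosDef.fromBlocks₁₁ B N.toBlocks₂₂ hA, ← hNb]
    exact hN.posSemidef

theorem misub_det_param {V κ : Type*} [DecidableEq V] [Fintype V] [Fintype κ] [DecidableEq κ]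
    (M : Matrix V V ℂ) (A : Finset V) (h : κ → V) (hinj : Function.Injective h)
    (hmem : ∀ k, h k ∈ A) (hcard : A.card = Fintype.card κ) :
    (M.submatrix (fun i : {v // v ∈ A} => (i : V)) (fun i : {v // v ∈ A} => (i : V))).det
      = (M.submatrix h h).det := by
  have hbij : Function.Bijective (fun k => (⟨h k, hmem k⟩ : {v // v ∈ A})) := by
    rw [Fintype.bijective_iff_injective_and_card]
    refine ⟨fun a b hab => hinj (congrArg Subtype.val hab), ?_⟩
    simp [Fintype.card_coe, hcard]
  let e := Equiv.ofBijective _ hbij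
  rw [← Matrix.det_submatrix_equiv_self e
    (M.submatrix (fun i : {v // v ∈ A} => (i : V)) (fun i : {v // v ∈ A} => (i : V)))]
  rw [Matrix.submatrix_submatrix]
  rfl

noncomputable def dd {V : Type*} [DecidableEq V] [Fintype V] (M : Matrix V V ℂ)
    (A : Finset V) : ℝ :=
  ((M.submatrix (fun i : {v // v ∈ A} => (i : V)) (fun i : {v // v ∈ A} => (i : V))).det).re

theorem dd_posdef {V : Type*} [DecidableEq V] [Fintype V] {M : Matrix V V ℂ}
    (hM : M.PosDef) (A : Finset V) :
    (M.submatrix (fun i : {v // v ∈ A} => (i : V)) (fun i : {v // v ∈ A} => (i : V))).PosDef :=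
  misub_posDef_submatrix hM _ Subtype.coe_injective

theorem dd_pos {V : Type*} [DecidableEq V] [Fintype V] {M : Matrix V V ℂ}
    (hM : M.PosDef) (A : Finset V) : 0 < dd M A :=
  (Complex.lt_def.mp (dd_posdef hM A).det_pos).1

theorem dd_im {V : Type*} [DecidableEq V] [Fintype V] {M : Matrix V V ℂ}
    (hM : M.PosDef) (A : Finset V) :
    ((M.submatrix (fun i : {v // v ∈ A} => (i : V)) (fun i : {v // v ∈ A} => (i : V))).det).im
      = 0 :=
  ((Complex.lt_def.mp (dd_posdef hM A).det_pos).2).symm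

theorem misub_step {V : Type*} [DecidableEq V] [Fintype V] {M : Matrix V V ℂ}
    (hM : M.PosDef) (A : Finset V) (x y : V)
    (hx : x ∉ A) (hy : y ∉ A) (hxy : x ≠ y) :
    dd M (insert y (insert x A)) * dd M A ≤ dd M (insert x A) * dd M (insert y A) := by
  classical
  set α := {v // v ∈ A}
  set g : α ⊕ Bool → V := Sum.elim (fun i => (i : V)) (fun b => cond b x y) with hg
  have hginj : Function.Injective g := by
    rintro (i | b) (j | c) hij
    · exact congrArg Sum.inl (Subtype.ext hij)
    · exfalso; cases c <;> simp [hg] at hij <;>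
        [exact hy (hij ▸ i.2); exact hx (hij ▸ i.2)]
    · exfalso; cases b <;> simp [hg] at hij <;>
        [exact hy (hij ▸ j.2); exact hx (hij ▸ j.2)]
    · cases b <;> cases c <;> simp [hg] at hij ⊢ <;> exact absurd hij (by tauto)
  set g1 : α ⊕ Unit → V := Sum.elim (fun i => (i : V)) (fun _ => x) with hg1
  have hg1inj : Function.Injective g1 := by
    rintro (i | b) (j | c) hij <;>
      simp only [hg1, Sum.elim_inl, Sum.elim_inr] at hij
    · exact congrArg Sum.inl (Subtype.ext hij)
    · exact absurd (hij ▸ i.2) hx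
    · exact absurd (hij.symm ▸ j.2) hx
    · cases b; cases c; rfl
  set g2 : α ⊕ Unit → V := Sum.elim (fun i => (i : V)) (fun _ => y) with hg2
  have hg2inj : Function.Injective g2 := by
    rintro (i | b) (j | c) hij <;>
      simp only [hg2, Sum.elim_inl, Sum.elim_inr] at hij
    · exact congrArg Sum.inl (Subtype.ext hij)
    · exact absurd (hij ▸ i.2) hy
    · exact absurd (hij.symm ▸ j.2) hy
    · cases b; cases c; rfl
  set N := M.submatrix g g with hN
  set N1 := M.submatrix g1 g1 with hN1
  set N2 := M.submatrix g2 g2 with hN2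
  have hNpd : N.PosDef := misub_posDef_submatrix hM g hginj
  have hN1pd : N1.PosDef := misub_posDef_submatrix hM g1 hg1inj
  have hN2pd : N2.PosDef := misub_posDef_submatrix hM g2 hg2inj
  obtain ⟨hdet, hCpsd⟩ := misub_schur N hNpd
  obtain ⟨hdet1, _⟩ := misub_schur N1 hN1pd
  obtain ⟨hdet2, _⟩ := misub_schur N2 hN2pd
  set C := N.toBlocks₂₂ - N.toBlocks₁₂ᴴ * N.toBlocks₁₁⁻¹ * N.toBlocks₁₂ with hC
  -- 1x1 Schur complements are diagonal entries of C
  have hC1 : (N1.toBlocks₂₂ - N1.toBlocks₁₂ᴴ * N1.toBlocks₁₁⁻¹ * N1.toBlocks₁₂).det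
      = C true true := by
    rw [Matrix.det_unique]; rfl
  have hC2 : (N2.toBlocks₂₂ - N2.toBlocks₁₂ᴴ * N2.toBlocks₁₁⁻¹ * N2.toBlocks₁₂).det
      = C false false := by
    rw [Matrix.det_unique]; rfl
  -- relate dd values to dets
  have hyx : y ∉ insert x A := by simp [hy, Ne.symm hxy]
  have hxyA : (insert y (insert x A)).card = A.card + 2 := by
    rw [Finset.card_insert_of_notMem hyx, Finset.card_insert_of_notMem hx]
  have hdd_xy : dd M (insert y (insert x A)) = N.det.re := by
    unfold dd
    rw [misub_det_param M _ g hginj]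
    · rintro (i | b)
      · simp [hg, Finset.mem_insert, i.2]
      · cases b <;> simp [hg]
    · rw [hxyA]
      simp only [Fintype.card_sum, Fintype.card_coe, Fintype.card_bool]
      rw [Fintype.card_coe]
  have hdd_x : dd M (insert x A) = N1.det.re := by
    unfold dd
    rw [misub_det_param M _ g1 hg1inj]
    · rintro (i | b)
      · simp [hg1, Finset.mem_insert, i.2]
      · simp [hg1]
    · rw [Finset.card_insert_of_notMem hx]
      simp only [Fintype.card_sum, Fintype.card_coe, Fintype.card_unit]
      rw [Fintype.card_coe]
  have hdd_y : dd M (insert y A) = N2.det.re := by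
    unfold dd
    rw [misub_det_param M _ g2 hg2inj]
    · rintro (i | b)
      · simp [hg2, Finset.mem_insert, i.2]
      · simp [hg2]
    · rw [Finset.card_insert_of_notMem hy]
      simp only [Fintype.card_sum, Fintype.card_coe, Fintype.card_unit]
      rw [Fintype.card_coe]
  have hApd : N.toBlocks₁₁.PosDef := dd_posdef hM A
  have hApos := Complex.lt_def.mp hApd.det_pos
  have haim : (N.toBlocks₁₁.det).im = 0 := hApos.2.symm
  have hare : 0 < (N.toBlocks₁₁.det).re := hApos.1
  have hddA : dd M A = (N.toBlocks₁₁.det).re := rfl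
  -- diagonal entries of C
  have hCtt : 0 ≤ C true true := by
    have := hCpsd.dotProduct_mulVec_nonneg (Pi.single true 1)
    simpa [dotProduct, Pi.single_apply] using this
  have hCff : 0 ≤ C false false := by
    have := hCpsd.dotProduct_mulVec_nonneg (Pi.single false 1)
    simpa [dotProduct, Pi.single_apply] using this
  have hCttre := (Complex.le_def.mp hCtt).1
  have hCttim := (Complex.le_def.mp hCtt).2.symm
  have hCffre := (Complex.le_def.mp hCff).1
  have hCffim := (Complex.le_def.mp hCff).2.symm
  simp only [Complex.zero_re, Complex.zero_im] at hCttre hCttim hCffre hCffim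
  -- hermitian off-diagonal
  have hoff : C false true = star (C true false) := by
    have := congrFun (congrFun hCpsd.1 false) true
    simpa [Matrix.conjTranspose_apply] using this.symm
  -- determinant of the 2x2 Schur complement
  have hdetC : C.det = C false false * C true true - C false true * C true false := by
    rw [← Matrix.det_submatrix_equiv_self finTwoEquiv C, Matrix.det_fin_two]
    simp [finTwoEquiv]
  have hprod : C false true * C true false = (Complex.normSq (C true false) : ℂ) := by
    rw [hoff, Complex.star_def, ← Complex.normSq_eq_conj_mul_self]
  have hdetCre : C.det.re
      = (C false false).re * (C true true).re - Complex.normSq (C true false) := by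
    rw [hdetC, hprod]
    simp [Complex.sub_re, Complex.mul_re, hCffim, hCttim]
  -- put everything together
  have e1 : N1.toBlocks₁₁ = N.toBlocks₁₁ := rfl
  have e2 : N2.toBlocks₁₁ = N.toBlocks₁₁ := rfl
  rw [hC1, e1] at hdet1
  rw [hC2, e2] at hdet2
  rw [hdd_xy, hdd_x, hdd_y, hddA, hdet, hdet1, hdet2]
  simp only [Complex.mul_re, haim, zero_mul, sub_zero, hCttim, mul_zero, hCffim]
  rw [hdetCre]
  nlinarith [mul_nonneg (mul_pos hare hare).le (Complex.normSq_nonneg (C true false))]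

theorem misub_chain {V : Type*} [DecidableEq V] [Fintype V] {M : Matrix V V ℂ}
    (hM : M.PosDef) :
    ∀ (n : ℕ) (S T : Finset V), S ⊆ T → (T \ S).card = n → ∀ x, x ∉ T →
      dd M (insert x T) * dd M S ≤ dd M (insert x S) * dd M T := by
  intro n
  induction n with
  | zero =>
    intro S T hST hc x _
    have : T = S := by
      have h1 : T \ S = ∅ := Finset.card_eq_zero.mp hc
      exact Finset.Subset.antisymm (by
        intro a ha
        by_contra h
        exact absurd (Finset.mem_sdiff.mpr ⟨ha, h⟩) (by simp [h1])) hST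
    subst this
    exact le_rfl
  | succ n ih =>
    intro S T hST hc x hx
    have hne : (T \ S).Nonempty := Finset.card_pos.mp (by omega)
    obtain ⟨y, hy⟩ := hne
    have hyT : y ∈ T := (Finset.mem_sdiff.mp hy).1
    have hyS : y ∉ S := (Finset.mem_sdiff.mp hy).2
    set T' := T.erase y with hT'
    have hST' : S ⊆ T' := fun a ha =>
      Finset.mem_erase.mpr ⟨fun h => hyS (h ▸ ha), hST ha⟩
    have hTT : insert y T' = T := Finset.insert_erase hyT
    have hcT' : (T' \ S).card = n := by
      rw [hT', Finset.erase_sdiff_comm, Finset.card_erase_of_mem hy, hc]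
      omega
    have hxT' : x ∉ T' := fun h => hx (Finset.erase_subset _ _ h)
    have hyT' : y ∉ T' := Finset.notMem_erase y T
    have hxy : x ≠ y := fun h => hx (h ▸ hyT)
    have hstep := misub_step hM T' x y hxT' hyT' hxy
    have ihx := ih S T' hST' hcT' x hxT'
    have hins : insert x T = insert y (insert x T') := by
      rw [← hTT, Finset.insert_comm]
    rw [hins, ← hTT]
    have p1 := dd_pos hM S
    have p2 := dd_pos hM T'
    have p3 := dd_pos hM (insert x T')
    have p4 := dd_pos hM (insert y T')
    have p5 := dd_pos hM (insert x S)
    have p6 := dd_pos hM (insert y (insert x T'))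
    nlinarith [mul_le_mul_of_nonneg_right hstep p1.le,
      mul_le_mul_of_nonneg_right ihx p4.le]

/-- In the jointly Gaussian measurement model f = Kβ + w with the noise
independent across coordinates (so the observations are conditionally
independent given β, and the joint covariance is Σ_f = K Σ_β Kᴴ + σ_w² I),
the mutual information G(S) = I(f_S ; β) = H(f_S) − H(w_S)
 = log det(Σ_f[S,S]) − |S| log σ_w² is a submodular set function. -/
theorem mutual_info_submodular
    {V ι : Type*} [DecidableEq V] [Fintype V] [Fintype ι]
    (K : Matrix V ι ℂ) (Sb : Matrix ι ι ℂ) (hSb : Sb.PosSemidef)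
    (σw : ℝ) (hσw : 0 < σw)
    (G : Finset V → ℝ)
    (hG : ∀ S : Finset V,
      G S = Real.log (((K * Sb * Kᴴ + ((σw : ℂ) ^ 2) • (1 : Matrix V V ℂ)).submatrix
              (fun i : {v // v ∈ S} => (i : V)) (fun i : {v // v ∈ S} => (i : V))).det.re)
            - (S.card : ℝ) * Real.log (σw ^ 2))
    (S T : Finset V) (hST : S ⊆ T) (x : V) (hx : x ∉ T) :
    G (insert x T) - G T ≤ G (insert x S) - G S := by
  classical
  set M := K * Sb * Kᴴ + ((σw : ℂ) ^ 2) • (1 : Matrix V V ℂ) with hMdef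
  have hMpd : M.PosDef := by
    have hP : (K * Sb * Kᴴ).PosSemidef := hSb.mul_mul_conjTranspose_same K
    have hQ : (((σw : ℂ) ^ 2) • (1 : Matrix V V ℂ)).PosDef := by
      rw [smul_one_eq_diagonal]
      refine Matrix.PosDef.diagonal (fun i => ?_)
      have h2 : ((σw : ℂ)) ^ 2 = ((σw ^ 2 : ℝ) : ℂ) := by push_cast; ring
      rw [h2]
      exact Complex.zero_lt_real.mpr (pow_pos hσw 2)
    exact Matrix.PosDef.posSemidef_add hP hQ
  have hGd : ∀ A : Finset V,
      G A = Real.log (dd M A) - (A.card : ℝ) * Real.log (σw ^ 2) := hG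
  have hxS : x ∉ S := fun h => hx (hST h)
  have key := misub_chain hMpd (T \ S).card S T hST rfl x hx
  have pT := dd_pos hMpd T
  have pS := dd_pos hMpd S
  have pTx := dd_pos hMpd (insert x T)
  have pSx := dd_pos hMpd (insert x S)
  have hlog : Real.log (dd M (insert x T)) - Real.log (dd M T)
      ≤ Real.log (dd M (insert x S)) - Real.log (dd M S) := by
    rw [← Real.log_div pTx.ne' pT.ne', ← Real.log_div pSx.ne' pS.ne',
      Real.log_le_log_iff (div_pos pTx pT) (div_pos pSx pS),
      div_le_div_iff₀ pT pS]
    exact key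
  rw [hGd (insert x T), hGd T, hGd (insert x S), hGd S,
    Finset.card_insert_of_notMem hx, Finset.card_insert_of_notMem hxS]
  push_cast
  linarith
end

section
/- More generally, with (σ_m²) symmetric and nonincreasing in |m| as above, and I a finite set of consecutive integers containing 0, the function x ↦ Σ_{m∉I} sinc²(m + x) σ_m² over ℝ is maximized by choosing x = −m₀ for m₀ the element of ℤ∖I of smallest absolute value (an integer grid point adjacent to I). -/
open MeasureTheory Complex intervalIntegral

lemma norm_sq_integral_exp (y : ℝ) :
    ‖∫ t in (0:ℝ)..1, Complex.exp ((2 * Real.pi * y * t : ℝ) * Complex.I)‖ ^ 2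
      = sinc y ^ 2 := by
  rcases eq_or_ne y 0 with rfl | hy
  · simp [sinc]
  · have hπ := Real.pi_pos
    have hK : ((2 * Real.pi * y : ℝ) : ℂ) * Complex.I ≠ 0 := by
      simp [Complex.ext_iff, hy, Real.pi_ne_zero, hπ.ne']
    have : (fun t : ℝ => Complex.exp ((2 * Real.pi * y * t : ℝ) * Complex.I))
        = fun t : ℝ => Complex.exp ((((2 * Real.pi * y : ℝ) : ℂ) * Complex.I) * t) := by
      funext t; push_cast; ring_nf
    rw [this, integral_exp_mul_complex hK]
    have hexp : ∀ r : ℝ, Complex.exp (((r : ℝ) : ℂ) * Complex.I)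
        = Complex.mk (Real.cos r) (Real.sin r) := by
      intro r
      rw [Complex.exp_mul_I]
      apply Complex.ext <;> simp [Complex.cos_ofReal_re, Complex.sin_ofReal_re]
    have h1 : (((2 * Real.pi * y : ℝ) : ℂ) * Complex.I) * 1 = ((2 * Real.pi * y : ℝ) : ℂ) * Complex.I := by ring
    have h0 : (((2 * Real.pi * y : ℝ) : ℂ) * Complex.I) * 0 = ((0 : ℝ) : ℂ) * Complex.I := by
      push_cast; ring
    simp only [Complex.ofReal_one, Complex.ofReal_zero, mul_one, mul_zero, zero_mul,
      Complex.exp_zero, hexp]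
    have hz : Complex.mk (Real.cos (2*Real.pi*y)) (Real.sin (2*Real.pi*y)) - 1
        = Complex.mk (Real.cos (2*Real.pi*y) - 1) (Real.sin (2*Real.pi*y)) := by
      apply Complex.ext <;> simp
    rw [hz, norm_div, div_pow, Complex.sq_norm,
      Complex.sq_norm, Complex.normSq_mk, Complex.normSq_mul, Complex.normSq_I,
      Complex.normSq_ofReal, sinc, if_neg hy]
    have hc : Real.cos (2*Real.pi*y) = 1 - 2 * Real.sin (Real.pi*y)^2 := by
      have h2 : 2*Real.pi*y = 2*(Real.pi*y) := by ring
      rw [h2, Real.cos_two_mul]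
      have := Real.sin_sq_add_cos_sq (Real.pi*y)
      nlinarith
    have hs : Real.sin (2*Real.pi*y) = 2 * Real.sin (Real.pi*y) * Real.cos (Real.pi*y) := by
      rw [show 2*Real.pi*y = 2*(Real.pi*y) by ring, Real.sin_two_mul]
    rw [hc, hs, div_pow]
    have hpy : Real.pi * y ≠ 0 := mul_ne_zero Real.pi_ne_zero hy
    have hpc := Real.sin_sq_add_cos_sq (Real.pi*y)
    field_simp
    linear_combination (4*Real.sin (Real.pi*y)^2) * hpc

example := 1

lemma sinc_neg (x : ℝ) : sinc (-x) = sinc x := by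
  rcases eq_or_ne x 0 with rfl | hx
  · simp
  · rw [sinc, sinc, if_neg (neg_ne_zero.mpr hx), if_neg hx, mul_neg, Real.sin_neg,
      neg_div_neg_eq]

lemma sinc_int (m : ℤ) (hm : m ≠ 0) : sinc (m : ℝ) = 0 := by
  rw [sinc, if_neg (by exact_mod_cast hm)]
  rw [mul_comm, Real.sin_int_mul_pi]
  simp

lemma sinc_sq_hasSum (x : ℝ) :
    HasSum (fun m : ℤ => sinc ((m : ℝ) + x) ^ 2) 1 := by
  haveI : Fact ((0:ℝ) < 1) := ⟨one_pos⟩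
  set g : ℝ → ℂ := fun t => Complex.exp ((2 * Real.pi * (-x) * t : ℝ) * Complex.I) with hg
  set G : AddCircle (1:ℝ) → ℂ := AddCircle.liftIoc 1 0 g with hG
  have hGval : ∀ t, ‖G t‖ = 1 := fun t => Complex.norm_exp_ofReal_mul_I _
  have hgc : Continuous g := by
    apply Complex.continuous_exp.comp
    exact (Complex.continuous_ofReal.comp (continuous_const.mul continuous_id)).mul
      continuous_const
  have hGmeas : Measurable G :=
    hgc.measurable.comp (measurable_subtype_coe.comp
      (AddCircle.measurableEquivIoc 1 0).measurable)
  have hmem : MemLp G 2 AddCircle.haarAddCircle :=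
    MemLp.of_bound hGmeas.aestronglyMeasurable 1 (Filter.Eventually.of_forall
      fun t => (hGval t).le)
  set f := hmem.toLp G with hf
  have hcoeff : ∀ m : ℤ, fourierCoeff (f : AddCircle (1:ℝ) → ℂ) m = fourierCoeff G m := by
    intro m
    apply MeasureTheory.integral_congr_ae
    filter_upwards [hmem.coeFn_toLp] with t ht
    rw [ht]
  have hC : ∀ m : ℤ, ‖fourierCoeff G m‖ ^ 2 = sinc ((m : ℝ) + x) ^ 2 := by
    intro m
    rw [hG, fourierCoeff_liftIoc_eq, fourierCoeffOn_eq_integral]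
    have hint : ∀ t ∈ Set.uIcc (0:ℝ) (0+1),
        fourier (-m) ((t : ℝ) : AddCircle ((0:ℝ)+1-0)) • g t
          = Complex.exp ((2 * Real.pi * (-x - m) * t : ℝ) * Complex.I) := by
      intro t ht
      rw [smul_eq_mul, fourier_coe_apply, hg]
      rw [← Complex.exp_add]
      congr 1
      push_cast
      field_simp
      ring
    rw [intervalIntegral.integral_congr hint]
    simp only [zero_add, sub_zero, one_smul, smul_eq_mul, one_div, inv_one, one_mul]
    rw [norm_sq_integral_exp (-x - m)]
    rw [show -x - (m:ℝ) = -((m:ℝ) + x) by ring, sinc_neg]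
  have hP := tsum_sq_fourierCoeff f
  have hnorm : ∫ t : AddCircle 1, ‖(f : AddCircle (1:ℝ) → ℂ) t‖ ^ 2 ∂AddCircle.haarAddCircle
      = 1 := by
    have h1 : ∫ t : AddCircle 1, ‖(f : AddCircle (1:ℝ) → ℂ) t‖ ^ 2 ∂AddCircle.haarAddCircle
        = ∫ _t : AddCircle 1, (1:ℝ) ∂AddCircle.haarAddCircle := by
      apply MeasureTheory.integral_congr_ae
      filter_upwards [hmem.coeFn_toLp] with t ht
      rw [ht, hGval]; norm_num
    rw [h1]; simp
  have hsumm : Summable (fun i : ℤ => ‖fourierCoeff (f : AddCircle (1:ℝ) → ℂ) i‖ ^ 2) := by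
    have h2 := (lp.memℓp (fourierBasis.repr f)).summable (by norm_num)
    have h3 : ∀ i : ℤ, ‖fourierBasis.repr f i‖ ^ ((2:ENNReal).toReal)
        = ‖fourierCoeff (f : AddCircle (1:ℝ) → ℂ) i‖ ^ 2 := by
      intro i
      rw [fourierBasis_repr]
      norm_num [Real.rpow_natCast]
    exact (summable_congr h3).mp h2
  rw [hnorm] at hP
  have := hsumm.hasSum
  rw [hP] at this
  have h4 : (fun i : ℤ => ‖fourierCoeff (f : AddCircle (1:ℝ) → ℂ) i‖ ^ 2)
      = fun m : ℤ => sinc ((m : ℝ) + x) ^ 2 := by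
    funext m; rw [hcoeff, hC]
  rwa [h4] at this

/-- With (σ_m²) nonnegative, symmetric, nonincreasing in |m|, and I a finite set
of consecutive integers containing 0, the function
x ↦ Σ_{m∉I} sinc²(m + x) σ_m² is maximized at x = −m₀, where m₀ is an element
of ℤ∖I of smallest absolute value. -/
theorem sinc_truncated_sum_maximized
    (σ : ℤ → ℝ) (hpos : ∀ m, 0 ≤ σ m) (hsymm : ∀ m, σ (-m) = σ m)
    (hmono : ∀ m₁ m₂ : ℤ, 0 ≤ m₁ → m₁ < m₂ → σ m₂ ≤ σ m₁)
    (I : Finset ℤ) (h0I : (0 : ℤ) ∈ I)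
    (hconsec : ∀ a b c : ℤ, a ∈ I → c ∈ I → a ≤ b → b ≤ c → b ∈ I)
    (m₀ : ℤ) (hm₀ : m₀ ∉ I) (hmin : ∀ m : ℤ, m ∉ I → |m₀| ≤ |m|)
    (x : ℝ) :
    ∑' m : ℤ, (if m ∈ I then 0 else sinc ((m : ℝ) + x) ^ 2 * σ m)
      ≤ ∑' m : ℤ, (if m ∈ I then 0 else sinc ((m : ℝ) + (-(m₀ : ℝ))) ^ 2 * σ m) := by

  have hRHS : ∑' m : ℤ, (if m ∈ I then 0 else sinc ((m : ℝ) + (-(m₀ : ℝ))) ^ 2 * σ m)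
      = σ m₀ := by
    rw [tsum_eq_single m₀]
    · rw [if_neg hm₀, show ((m₀ : ℝ) + -(m₀ : ℝ)) = 0 by ring]
      simp [sinc]
    · intro b hb
      by_cases hbI : b ∈ I
      · simp [hbI]
      · rw [if_neg hbI, show ((b : ℝ) + -(m₀ : ℝ)) = ((b - m₀ : ℤ) : ℝ) by push_cast; ring,
          sinc_int _ (sub_ne_zero.mpr hb)]
        ring
  rw [hRHS]
  have hσabs : ∀ m : ℤ, σ m = σ |m| := by
    intro m
    rcases abs_choice m with h | h
    · rw [h]
    · rw [h, hsymm]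
  have hle : ∀ m : ℤ, m ∉ I → σ m ≤ σ m₀ := by
    intro m hm
    have h := hmin m hm
    rw [hσabs m, hσabs m₀]
    rcases h.lt_or_eq with h' | h'
    · exact hmono _ _ (abs_nonneg _) h'
    · rw [h']
  have hg : HasSum (fun m : ℤ => sinc ((m : ℝ) + x) ^ 2 * σ m₀) (1 * σ m₀) :=
    (sinc_sq_hasSum x).mul_right (σ m₀)
  have hfg : ∀ m : ℤ, (if m ∈ I then 0 else sinc ((m : ℝ) + x) ^ 2 * σ m)
      ≤ sinc ((m : ℝ) + x) ^ 2 * σ m₀ := by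
    intro m
    by_cases hmI : m ∈ I
    · rw [if_pos hmI]
      exact mul_nonneg (sq_nonneg _) (hpos m₀)
    · rw [if_neg hmI]
      exact mul_le_mul_of_nonneg_left (hle m hmI) (sq_nonneg _)
  have hf0 : ∀ m : ℤ, 0 ≤ (if m ∈ I then 0 else sinc ((m : ℝ) + x) ^ 2 * σ m) := by
    intro m
    by_cases hmI : m ∈ I
    · rw [if_pos hmI]
    · rw [if_neg hmI]
      exact mul_nonneg (sq_nonneg _) (hpos m)
  have hfsumm : Summable (fun m : ℤ => if m ∈ I then 0 else sinc ((m : ℝ) + x) ^ 2 * σ m) :=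
    Summable.of_nonneg_of_le hf0 hfg hg.summable
  calc ∑' m : ℤ, (if m ∈ I then 0 else sinc ((m : ℝ) + x) ^ 2 * σ m)
      ≤ ∑' m : ℤ, sinc ((m : ℝ) + x) ^ 2 * σ m₀ := Summable.tsum_le_tsum hfg hfsumm hg.summable
    _ = 1 * σ m₀ := hg.tsum_eq
    _ = σ m₀ := one_mul _
end

section
/- Under the truncation conditions of the finite-dimensional approximation, if ε = Σ_{m ∉ M} σ_m² satisfies ε < σ_w² N^{−3/2}, then −N log(1 + ε N^{3/2}/σ_w²) ≤ I(f̃_S ; {β_m}) − I(f̂_S ; β) ≤ −N log(1 − ε N^{3/2}/σ_w²). -/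
open Matrix

lemma abs_sinc_le_one (y : ℝ) : |sinc y| ≤ 1 := by
  unfold sinc
  split_ifs with h
  · simp
  · have hπ : Real.pi * y ≠ 0 := mul_ne_zero Real.pi_ne_zero h
    rw [abs_div, div_le_one (abs_pos.mpr hπ)]
    exact Real.abs_sin_le_abs

lemma core_sum {N : ℕ} (a w : Fin N → ℝ) (c : ℝ) :
    (∑ i, ∑ j, (a i * a j * c) * (w i * w j)) = c * (∑ i, a i * w i) ^ 2 := by
  have h : (∑ i, a i * w i) ^ 2 = ∑ i, ∑ j, (a i * w i) * (a j * w j) := by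
    rw [sq, Finset.sum_mul_sum]
  rw [h, Finset.mul_sum]
  refine Finset.sum_congr rfl fun i _ => ?_
  rw [Finset.mul_sum]
  exact Finset.sum_congr rfl fun j _ => by ring

open scoped MatrixOrder in
lemma posdef_det_mono {n : Type*} [Fintype n] [DecidableEq n] {A B : Matrix n n ℝ}
    (hA : A.PosDef) (hE : (B - A).PosSemidef) : A.det ≤ B.det := by
  classical
  have hApsd := hA.posSemidef
  have hSpsd : (CFC.sqrt A).PosSemidef := (CFC.sqrt_nonneg A).posSemidef
  set S : Matrix n n ℝ := CFC.sqrt A with hSdef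
  have hSS : S * S = A := CFC.sqrt_mul_sqrt_self A hApsd.nonneg
  have hdetA : 0 < A.det := hA.det_pos
  have hdetS : S.det * S.det = A.det := by rw [← det_mul, hSS]
  have hSdetne : S.det ≠ 0 := by
    intro h
    rw [h, mul_zero] at hdetS
    exact hdetA.ne' hdetS.symm
  have hSunit : IsUnit S.det := isUnit_iff_ne_zero.mpr hSdetne
  have hSinv : S⁻¹ * S = 1 := nonsing_inv_mul S hSunit
  have hSinv' : S * S⁻¹ = 1 := mul_nonsing_inv S hSunit
  have hSH : Sᴴ = S := hSpsd.isHermitian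
  have hSinvH : (S⁻¹)ᴴ = S⁻¹ := by rw [conjTranspose_nonsing_inv, hSH]
  set M : Matrix n n ℝ := S⁻¹ * B * S⁻¹ with hMdef
  have hAim : S⁻¹ * A * S⁻¹ = 1 := by
    rw [← hSS]
    simp only [← Matrix.mul_assoc]
    rw [hSinv, Matrix.one_mul, hSinv']
  have hM1 : M - 1 = S⁻¹ * (B - A) * S⁻¹ := by
    rw [Matrix.mul_sub, Matrix.sub_mul, hAim, hMdef]
  have hM1psd : (M - 1).PosSemidef := by
    have h := hE.conjTranspose_mul_mul_same S⁻¹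
    rw [hSinvH] at h
    rwa [hM1]
  have hMherm : M.IsHermitian := by
    have hM : M = 1 + (M - 1) := by abel
    rw [hM]
    exact Matrix.isHermitian_one.add hM1psd.isHermitian
  have heig : ∀ i, (1 : ℝ) ≤ hMherm.eigenvalues i := by
    intro i
    have hvnorm : star (⇑(hMherm.eigenvectorBasis i)) ⬝ᵥ ⇑(hMherm.eigenvectorBasis i) = 1 := by
      have h1 : ‖hMherm.eigenvectorBasis i‖ = 1 := hMherm.eigenvectorBasis.orthonormal.1 i
      have h2 := EuclideanSpace.inner_eq_star_dotProduct (𝕜 := ℝ)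
        (hMherm.eigenvectorBasis i) (hMherm.eigenvectorBasis i)
      rw [real_inner_self_eq_norm_sq, h1] at h2
      simpa using h2.symm
    have heq := hMherm.eigenvalues_eq i
    have hup : star (⇑(hMherm.eigenvectorBasis i)) ⬝ᵥ (M *ᵥ ⇑(hMherm.eigenvectorBasis i))
        = star (⇑(hMherm.eigenvectorBasis i)) ⬝ᵥ ((M - 1) *ᵥ ⇑(hMherm.eigenvectorBasis i)) + 1 := by
      rw [← hvnorm, Matrix.sub_mulVec, dotProduct_sub, Matrix.one_mulVec]
      ring
    have hnn := hM1psd.dotProduct_mulVec_nonneg (⇑(hMherm.eigenvectorBasis i))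
    rw [hup] at heq
    simp only [RCLike.re_to_real] at heq
    linarith [heq.ge, heq.le]
  have hdetM : (1 : ℝ) ≤ M.det := by
    rw [hMherm.det_eq_prod_eigenvalues]
    calc (1:ℝ) = ∏ _i : n, (1:ℝ) := by simp
    _ ≤ ∏ i, hMherm.eigenvalues i :=
      Finset.prod_le_prod (by simp) (fun i _ => heig i)
  have hBSMS : B = S * M * S := by
    rw [hMdef]
    simp only [← Matrix.mul_assoc]
    rw [hSinv', Matrix.one_mul, Matrix.mul_assoc, hSinv, Matrix.mul_one]
  have hdetB : B.det = A.det * M.det := by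
    rw [hBSMS, det_mul, det_mul, ← hdetS]; ring
  rw [hdetB]
  exact le_mul_of_one_le_right hdetA.le hdetM

/-- Truncation bound (Lemma 1): in the full model f̃_n = Σ_{m∈ℤ} K_{nm}β_m + w_n
and the truncated model f̂_n = Σ_{m∈Ms} K_{nm}β_m + w_n with
K_{nm} = sinc(m + (2/λ)x_n), β_m ∼ CN(0, σ_m²) independent, w ∼ CN(0, σ_w² I),
the corresponding Gaussian mutual informations
I(f ; β) = log det Σ_f − N log σ_w² satisfy, whenever
ε = Σ_{m∉Ms} σ_m² < σ_w² N^{−3/2},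
−N log(1 + εN^{3/2}/σ_w²) ≤ I(f̃;{β_m}) − I(f̂;β) ≤ −N log(1 − εN^{3/2}/σ_w²). -/
theorem truncation_mutual_info_bound
    (N : ℕ) (hN : 0 < N) (lam : ℝ) (hlam : 0 < lam)
    (x : Fin N → ℝ)
    (σ : ℤ → ℝ) (hσpos : ∀ m, 0 ≤ σ m) (hσsum : Summable σ)
    (Ms : Finset ℤ) (σw : ℝ) (hσw : 0 < σw)
    (ε : ℝ) (hε : ε = ∑' m : ℤ, (if m ∈ Ms then 0 else σ m))
    (hsmall : ε < σw ^ 2 * (N : ℝ) ^ (-(3 : ℝ) / 2))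
    (Sfull Strunc : Matrix (Fin N) (Fin N) ℝ)
    (hfull : ∀ i j, Sfull i j =
      (∑' m : ℤ, sinc ((m : ℝ) + 2 / lam * x i) * sinc ((m : ℝ) + 2 / lam * x j) * σ m)
        + (if i = j then σw ^ 2 else 0))
    (htrunc : ∀ i j, Strunc i j =
      (∑ m ∈ Ms, sinc ((m : ℝ) + 2 / lam * x i) * sinc ((m : ℝ) + 2 / lam * x j) * σ m)
        + (if i = j then σw ^ 2 else 0))
    (Ifull Itrunc : ℝ)
    (hIfull : Ifull = Real.log Sfull.det - (N : ℝ) * Real.log (σw ^ 2))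
    (hItrunc : Itrunc = Real.log Strunc.det - (N : ℝ) * Real.log (σw ^ 2)) :
    -(N : ℝ) * Real.log (1 + ε * (N : ℝ) ^ ((3 : ℝ) / 2) / σw ^ 2) ≤ Ifull - Itrunc ∧
    Ifull - Itrunc ≤ -(N : ℝ) * Real.log (1 - ε * (N : ℝ) ^ ((3 : ℝ) / 2) / σw ^ 2) := by
  classical
  set k : ℤ → Fin N → ℝ := fun m i => sinc ((m : ℝ) + 2 / lam * x i) with hk
  set g : Fin N → Fin N → ℤ → ℝ := fun i j m => k m i * k m j * σ m with hg
  have hσw2 : (0:ℝ) < σw ^ 2 := by positivity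
  -- basic bounds
  have hkle : ∀ m i, |k m i| ≤ 1 := fun m i => abs_sinc_le_one _
  have hgle : ∀ i j m, |g i j m| ≤ σ m := by
    intro i j m
    have h1 := hkle m i
    have h2 := hkle m j
    have h3 := abs_nonneg (k m i)
    have h4 := abs_nonneg (k m j)
    calc |g i j m| = |k m i| * |k m j| * |σ m| := by rw [hg]; simp [abs_mul]
    _ ≤ 1 * 1 * σ m := by
        rw [abs_of_nonneg (hσpos m)]
        have := mul_le_mul h1 h2 h4 zero_le_one
        nlinarith [hσpos m]
    _ = σ m := by ring
  -- summability
  have hsumg : ∀ i j, Summable (g i j) := fun i j =>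
    Summable.of_abs (Summable.of_nonneg_of_le (fun m => abs_nonneg _) (hgle i j) hσsum)
  set gt : Fin N → Fin N → ℤ → ℝ := fun i j m => if m ∈ Ms then 0 else g i j m with hgt
  set gh : Fin N → Fin N → ℤ → ℝ := fun i j m => if m ∈ Ms then g i j m else 0 with hgh
  have hgtle : ∀ i j m, |gt i j m| ≤ σ m := by
    intro i j m
    by_cases hm : m ∈ Ms <;> simp [hgt, hm, hσpos m, hgle i j m]
  have hsumgt : ∀ i j, Summable (gt i j) := fun i j =>
    Summable.of_abs (Summable.of_nonneg_of_le (fun m => abs_nonneg _) (hgtle i j) hσsum)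
  have hsumgh : ∀ i j, Summable (gh i j) := by
    intro i j
    refine Summable.of_abs (Summable.of_nonneg_of_le (fun m => abs_nonneg _) ?_ hσsum)
    intro m
    by_cases hm : m ∈ Ms <;> simp [hgh, hm, hσpos m, hgle i j m]
  -- tail σ
  set σt : ℤ → ℝ := fun m => if m ∈ Ms then 0 else σ m with hσt
  have hsumσt : Summable σt := by
    refine Summable.of_nonneg_of_le (fun m => ?_) (fun m => ?_) hσsum <;>
      by_cases hm : m ∈ Ms <;> simp [hσt, hm, hσpos m]
  have hε0 : 0 ≤ ε := by
    rw [hε]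
    refine tsum_nonneg fun m => ?_
    by_cases hm : m ∈ Ms <;> simp [hm, hσpos m]
  -- entry formula for E = Sfull - Strunc
  have hE_entry : ∀ i j, (Sfull - Strunc) i j = ∑' m, gt i j m := by
    intro i j
    have hgsplit : ∀ m, g i j m = gh i j m + gt i j m := by
      intro m; by_cases hm : m ∈ Ms <;> simp [hgh, hgt, hm]
    have hsplit : ∑' m, g i j m = (∑ m ∈ Ms, g i j m) + ∑' m, gt i j m := by
      have h1 : ∑' m, g i j m = (∑' m, gh i j m) + ∑' m, gt i j m := by
        rw [← Summable.tsum_add (hsumgh i j) (hsumgt i j)]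
        exact tsum_congr fun m => hgsplit m
      have h2 : ∑' m, gh i j m = ∑ m ∈ Ms, g i j m := by
        rw [tsum_eq_sum (s := Ms) fun m hm => by simp [hgh, hm]]
        exact Finset.sum_congr rfl fun m hm => by simp [hgh, hm]
      rw [h1, h2]
    rw [Matrix.sub_apply, hfull i j, htrunc i j,
      show (∑' m : ℤ, sinc ((m : ℝ) + 2 / lam * x i) * sinc ((m : ℝ) + 2 / lam * x j) * σ m)
        = ∑' m, g i j m from rfl, hsplit,
      show (∑ m ∈ Ms, sinc ((m : ℝ) + 2 / lam * x i) * sinc ((m : ℝ) + 2 / lam * x j) * σ m)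
        = ∑ m ∈ Ms, g i j m from rfl]
    ring
  -- quadratic form of E
  have hQE : ∀ v : Fin N → ℝ, star v ⬝ᵥ ((Sfull - Strunc) *ᵥ v)
      = ∑' m, σt m * (∑ i, k m i * v i) ^ 2 := by
    intro v
    have hsum1 : ∀ i j, Summable fun m => gt i j m * (v i * v j) :=
      fun i j => (hsumgt i j).mul_right _
    have hsum2 : ∀ i : Fin N, Summable fun m => ∑ j, gt i j m * (v i * v j) :=
      fun i => summable_sum fun j _ => hsum1 i j
    calc star v ⬝ᵥ ((Sfull - Strunc) *ᵥ v)
        = ∑ i, ∑ j, v i * ((Sfull - Strunc) i j * v j) := by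
          simp [dotProduct, mulVec, Finset.mul_sum]
      _ = ∑ i, ∑ j, ∑' m, gt i j m * (v i * v j) := by
          refine Finset.sum_congr rfl fun i _ => Finset.sum_congr rfl fun j _ => ?_
          rw [tsum_mul_right, hE_entry i j]; ring
      _ = ∑ i, ∑' m, ∑ j, gt i j m * (v i * v j) := by
          refine Finset.sum_congr rfl fun i _ => ?_
          exact (Summable.tsum_finsetSum fun j _ => hsum1 i j).symm
      _ = ∑' m, ∑ i, ∑ j, gt i j m * (v i * v j) := (Summable.tsum_finsetSum fun i _ => hsum2 i).symm
      _ = ∑' m, σt m * (∑ i, k m i * v i) ^ 2 := by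
          refine tsum_congr fun m => ?_
          by_cases hm : m ∈ Ms
          · simp [hgt, hσt, hm]
          · simp only [hgt, hσt, hg, if_neg hm]
            exact core_sum (k m) v (σ m)
  -- G and Strunc
  set G : Matrix (Fin N) (Fin N) ℝ := Matrix.of fun i j => ∑ m ∈ Ms, g i j m with hG
  have hGapp : ∀ i j, G i j = ∑ m ∈ Ms, g i j m := fun i j => rfl
  have hStr : Strunc = σw ^ 2 • (1 : Matrix (Fin N) (Fin N) ℝ) + G := by
    ext i j
    rw [Matrix.add_apply, Matrix.smul_apply, Matrix.one_apply, htrunc i j, hGapp i j,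
      show (∑ m ∈ Ms, sinc ((m : ℝ) + 2 / lam * x i) * sinc ((m : ℝ) + 2 / lam * x j) * σ m)
        = ∑ m ∈ Ms, g i j m from rfl]
    split_ifs with h <;> simp [smul_eq_mul] <;> ring
  have hG_psd : G.PosSemidef := by
    refine Matrix.posSemidef_iff_dotProduct_mulVec.mpr ⟨?_, ?_⟩
    · ext i j
      rw [Matrix.conjTranspose_apply, hGapp j i, hGapp i j, star_trivial]
      exact Finset.sum_congr rfl fun m _ => by simp only [hg]; ring
    · intro v
      have hq : star v ⬝ᵥ (G *ᵥ v) = ∑ m ∈ Ms, σ m * (∑ i, k m i * v i) ^ 2 := by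
        calc star v ⬝ᵥ (G *ᵥ v) = ∑ i, ∑ j, v i * (G i j * v j) := by
              simp [dotProduct, mulVec, Finset.mul_sum]
          _ = ∑ i, ∑ j, ∑ m ∈ Ms, (k m i * k m j * σ m) * (v i * v j) := by
              refine Finset.sum_congr rfl fun i _ => Finset.sum_congr rfl fun j _ => ?_
              rw [hGapp i j, Finset.sum_mul, Finset.mul_sum]
              exact Finset.sum_congr rfl fun m _ => by simp only [hg]; ring
          _ = ∑ i, ∑ m ∈ Ms, ∑ j, (k m i * k m j * σ m) * (v i * v j) :=
              Finset.sum_congr rfl fun i _ => Finset.sum_comm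
          _ = ∑ m ∈ Ms, ∑ i, ∑ j, (k m i * k m j * σ m) * (v i * v j) :=
              Finset.sum_comm
          _ = ∑ m ∈ Ms, σ m * (∑ i, k m i * v i) ^ 2 :=
              Finset.sum_congr rfl fun m _ => core_sum (k m) v (σ m)
      rw [hq]
      exact Finset.sum_nonneg fun m _ => mul_nonneg (hσpos m) (sq_nonneg _)
  have hdiag_pd : (σw ^ 2 • (1 : Matrix (Fin N) (Fin N) ℝ)).PosDef := by
    have h : σw ^ 2 • (1 : Matrix (Fin N) (Fin N) ℝ)
        = Matrix.diagonal fun _ : Fin N => σw ^ 2 := by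
      ext i j
      by_cases hij : i = j <;>
        simp [Matrix.one_apply, Matrix.diagonal, hij]
    rw [h]
    exact Matrix.PosDef.diagonal fun _ => hσw2
  have hStrunc_pd : Strunc.PosDef := by
    rw [hStr]; exact hdiag_pd.add_posSemidef hG_psd
  have hσtnn : ∀ m, 0 ≤ σt m := by
    intro m; by_cases hm : m ∈ Ms <;> simp [hσt, hm, hσpos m]
  have hE_psd : (Sfull - Strunc).PosSemidef := by
    refine Matrix.posSemidef_iff_dotProduct_mulVec.mpr ⟨?_, ?_⟩
    · ext i j
      rw [Matrix.conjTranspose_apply, star_trivial, hE_entry j i, hE_entry i j]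
      refine tsum_congr fun m => ?_
      by_cases hm : m ∈ Ms
      · simp [hgt, hm]
      · simp only [hgt, hg, if_neg hm]; ring
    · intro v
      rw [hQE v]
      exact tsum_nonneg fun m => mul_nonneg (hσtnn m) (sq_nonneg _)
  have hSf_eq : Strunc + (Sfull - Strunc) = Sfull := by abel
  have hSfull_pd : Sfull.PosDef := by
    rw [← hSf_eq]; exact hStrunc_pd.add_posSemidef hE_psd
  -- quadratic bounds
  have hQtr_ge : ∀ v : Fin N → ℝ, σw ^ 2 * (∑ i, v i ^ 2) ≤ star v ⬝ᵥ (Strunc *ᵥ v) := by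
    intro v
    have hvv : star v ⬝ᵥ v = ∑ i, v i ^ 2 := by simp [dotProduct, sq]
    have h1 : star v ⬝ᵥ (Strunc *ᵥ v)
        = σw ^ 2 * (∑ i, v i ^ 2) + star v ⬝ᵥ (G *ᵥ v) := by
      conv_lhs => rw [hStr]
      rw [Matrix.add_mulVec, dotProduct_add, smul_mulVec, Matrix.one_mulVec,
        dotProduct_smul, hvv]
      simp [smul_eq_mul]
    rw [h1]
    have := hG_psd.dotProduct_mulVec_nonneg v
    linarith
  have hQE_le : ∀ v : Fin N → ℝ, star v ⬝ᵥ ((Sfull - Strunc) *ᵥ v)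
      ≤ ε * (N : ℝ) * (∑ i, v i ^ 2) := by
    intro v
    rw [hQE v]
    have hterm : ∀ m, σt m * (∑ i, k m i * v i) ^ 2 ≤ σt m * ((N : ℝ) * ∑ i, v i ^ 2) := by
      intro m
      refine mul_le_mul_of_nonneg_left ?_ (hσtnn m)
      have h1 : |∑ i, k m i * v i| ≤ ∑ i, |v i| := by
        refine (Finset.abs_sum_le_sum_abs _ _).trans ?_
        refine Finset.sum_le_sum fun i _ => ?_
        rw [abs_mul]
        calc |k m i| * |v i| ≤ 1 * |v i| :=
              mul_le_mul_of_nonneg_right (hkle m i) (abs_nonneg _)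
          _ = |v i| := one_mul _
      calc (∑ i, k m i * v i) ^ 2 = |∑ i, k m i * v i| ^ 2 := (sq_abs _).symm
        _ ≤ (∑ i, |v i|) ^ 2 := by
            exact pow_le_pow_left₀ (abs_nonneg _) h1 2
        _ ≤ ((Finset.univ : Finset (Fin N)).card : ℝ) * ∑ i, |v i| ^ 2 :=
            sq_sum_le_card_mul_sum_sq
        _ = (N : ℝ) * ∑ i, v i ^ 2 := by simp [sq_abs]
    have hrhs_sum : Summable fun m => σt m * ((N : ℝ) * ∑ i, v i ^ 2) := hsumσt.mul_right _
    have hlhs_sum : Summable fun m => σt m * (∑ i, k m i * v i) ^ 2 :=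
      Summable.of_nonneg_of_le (fun m => mul_nonneg (hσtnn m) (sq_nonneg _)) hterm hrhs_sum
    calc ∑' m, σt m * (∑ i, k m i * v i) ^ 2
        ≤ ∑' m, σt m * ((N : ℝ) * ∑ i, v i ^ 2) := Summable.tsum_le_tsum hterm hlhs_sum hrhs_sum
      _ = ε * (N : ℝ) * (∑ i, v i ^ 2) := by rw [tsum_mul_right, ← hε]; ring
  -- the scaled comparison matrix
  set c : ℝ := ε * (N : ℝ) / σw ^ 2 with hc
  have hc0 : 0 ≤ c := div_nonneg (mul_nonneg hε0 (Nat.cast_nonneg N)) hσw2.le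
  have hcσ : c * σw ^ 2 = ε * (N : ℝ) := by
    rw [hc]; field_simp
  have hup_psd : ((1 + c) • Strunc - Sfull).PosSemidef := by
    refine Matrix.posSemidef_iff_dotProduct_mulVec.mpr ⟨?_, ?_⟩
    · have h1 := hStrunc_pd.isHermitian
      have h2 := hSfull_pd.isHermitian
      rw [Matrix.IsHermitian, Matrix.conjTranspose_sub, Matrix.conjTranspose_smul,
        h1.eq, h2.eq, star_trivial]
    · intro v
      have hsplit : star v ⬝ᵥ (((1 + c) • Strunc - Sfull) *ᵥ v)
          = c * (star v ⬝ᵥ (Strunc *ᵥ v)) - star v ⬝ᵥ ((Sfull - Strunc) *ᵥ v) := by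
        rw [Matrix.sub_mulVec, dotProduct_sub, smul_mulVec, dotProduct_smul,
          Matrix.sub_mulVec, dotProduct_sub]
        simp only [smul_eq_mul]
        ring
      rw [hsplit]
      have h1 := hQtr_ge v
      have h2 := hQE_le v
      have h3 : c * (σw ^ 2 * ∑ i, v i ^ 2) ≤ c * (star v ⬝ᵥ (Strunc *ᵥ v)) :=
        mul_le_mul_of_nonneg_left h1 hc0
      have h4 : c * (σw ^ 2 * ∑ i, v i ^ 2) = ε * (N : ℝ) * (∑ i, v i ^ 2) := by
        rw [← hcσ]; ring
      linarith
  -- determinant bounds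
  have hdet_lo : Strunc.det ≤ Sfull.det := posdef_det_mono hStrunc_pd hE_psd
  have hdet_hi : Sfull.det ≤ (1 + c) ^ N * Strunc.det := by
    have h := posdef_det_mono hSfull_pd hup_psd
    rwa [Matrix.det_smul, Fintype.card_fin] at h
  have hdetT : 0 < Strunc.det := hStrunc_pd.det_pos
  have hdetF : 0 < Sfull.det := hSfull_pd.det_pos
  -- numeric facts
  set t : ℝ := ε * (N : ℝ) ^ ((3 : ℝ) / 2) / σw ^ 2 with ht
  have hN1 : (1 : ℝ) ≤ (N : ℝ) := by exact_mod_cast hN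
  have hNps : (N : ℝ) ≤ (N : ℝ) ^ ((3 : ℝ) / 2) := by
    nth_rewrite 1 [← Real.rpow_one (N : ℝ)]
    exact Real.rpow_le_rpow_of_exponent_le hN1 (by norm_num)
  have ht0 : 0 ≤ t :=
    div_nonneg (mul_nonneg hε0 (Real.rpow_nonneg (Nat.cast_nonneg N) _)) hσw2.le
  have hct : c ≤ t := by
    rw [hc, ht]
    gcongr
  have ht1 : t < 1 := by
    rw [ht, div_lt_one hσw2]
    have hpow_pos : 0 < (N : ℝ) ^ ((3 : ℝ) / 2) := Real.rpow_pos_of_pos (by linarith) _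
    have hre : σw ^ 2 * (N : ℝ) ^ (-(3 : ℝ) / 2) = σw ^ 2 / (N : ℝ) ^ ((3 : ℝ) / 2) := by
      rw [neg_div, Real.rpow_neg (Nat.cast_nonneg N)]
      ring
    rw [hre] at hsmall
    calc ε * (N : ℝ) ^ ((3 : ℝ) / 2)
        < (σw ^ 2 / (N : ℝ) ^ ((3 : ℝ) / 2)) * (N : ℝ) ^ ((3 : ℝ) / 2) :=
          mul_lt_mul_of_pos_right hsmall hpow_pos
      _ = σw ^ 2 := by field_simp
  -- logs
  have hdiff : Ifull - Itrunc = Real.log Sfull.det - Real.log Strunc.det := by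
    rw [hIfull, hItrunc]; ring
  constructor
  · rw [hdiff]
    have h1 : Real.log Strunc.det ≤ Real.log Sfull.det := Real.log_le_log hdetT hdet_lo
    have h2 : 0 ≤ Real.log (1 + t) := Real.log_nonneg (by linarith)
    have h3 : 0 ≤ (N : ℝ) * Real.log (1 + t) := mul_nonneg (Nat.cast_nonneg N) h2
    linarith
  · rw [hdiff]
    have h1t : 0 < 1 - t := by linarith
    have hlogB : Real.log Sfull.det ≤ (N : ℝ) * Real.log (1 + c) + Real.log Strunc.det := by
      calc Real.log Sfull.det ≤ Real.log ((1 + c) ^ N * Strunc.det) :=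
            Real.log_le_log hdetF hdet_hi
        _ = (N : ℝ) * Real.log (1 + c) + Real.log Strunc.det := by
            rw [Real.log_mul (by positivity) hdetT.ne', Real.log_pow]
    have hklog : Real.log (1 + c) ≤ Real.log (1 - t)⁻¹ := by
      apply Real.log_le_log (by linarith)
      rw [inv_eq_one_div, le_div_iff₀ h1t]
      nlinarith
    have hloginv : Real.log (1 - t)⁻¹ = -Real.log (1 - t) := Real.log_inv _
    have h5 : (N : ℝ) * Real.log (1 + c) ≤ (N : ℝ) * -Real.log (1 - t) := by
      rw [← hloginv]
      exact mul_le_mul_of_nonneg_left hklog (Nat.cast_nonneg N)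
    linarith
end
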